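/- The gradient of r(s,p) := |s - conj(s)·p|² + ε - (1-|p|²)², viewed as a real function on ℂ × 𝔻 ≅ ℝ⁴, does not vanish at any point of the boundary ∂D_ε, for ε ∈ (0,1). -/

import Mathlib

open Complex

def Dset (ε : ℝ) : Set (ℂ × ℂ) :=
  {sp | Real.sqrt (‖sp.1 - (starRingEnd ℂ) sp.1 * sp.2‖ ^ 2 + ε)
      + ‖sp.2‖ ^ 2 < 1}

noncomputable def rdef (ε : ℝ) (sp : ℂ × ℂ) : ℝ :=
  ‖sp.1 - (starRingEnd ℂ) sp.1 * sp.2‖ ^ 2 + ε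
    - (1 - ‖sp.2‖ ^ 2) ^ 2

lemma rdef_eq (ε : ℝ) : rdef ε = fun sp : ℂ × ℂ =>
    ‖sp.1 - (starRingEnd ℂ) sp.1 * sp.2‖ ^ 2 + ε - (1 - ‖sp.2‖ ^ 2) ^ 2 := by
  funext sp
  simp [rdef]

lemma rdef_diff (ε : ℝ) : Differentiable ℝ (rdef ε) := by
  rw [rdef_eq]
  have hc : Differentiable ℝ (fun w : ℂ => (starRingEnd ℂ) w) :=
    Complex.conjCLE.differentiable
  have h1 : Differentiable ℝ (fun sp : ℂ × ℂ => sp.1 - (starRingEnd ℂ) sp.1 * sp.2) :=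
    differentiable_fst.sub ((hc.comp differentiable_fst).mul differentiable_snd)
  have h2 := h1.norm_sq ℂ
  have h3 := (differentiable_snd : Differentiable ℝ (fun sp : ℂ × ℂ => sp.2)).norm_sq ℂ
  exact (h2.add_const ε).sub (((differentiable_const 1).sub h3).pow 2)

set_option maxHeartbeats 1000000 in
lemma frontier_eq_one (ε : ℝ) :
    ∀ z ∈ frontier (Dset ε),
      Real.sqrt (‖z.1 - (starRingEnd ℂ) z.1 * z.2‖ ^ 2 + ε)
        + ‖z.2‖ ^ 2 = 1 := by
  intro z hz
  have hf : Continuous fun sp : ℂ × ℂ =>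
      Real.sqrt (‖sp.1 - (starRingEnd ℂ) sp.1 * sp.2‖ ^ 2 + ε)
        + ‖sp.2‖ ^ 2 := by
    apply Continuous.add
    · apply Real.continuous_sqrt.comp
      apply Continuous.add _ continuous_const
      apply Continuous.pow
      exact continuous_norm.comp
        (continuous_fst.sub ((Complex.continuous_conj.comp continuous_fst).mul continuous_snd))
    · exact (continuous_norm.comp continuous_snd).pow 2
  exact frontier_lt_subset_eq hf continuous_const hz

theorem stmt7 (ε : ℝ) (hε : 0 < ε) (hε1 : ε < 1) :
    ∀ z ∈ frontier (Dset ε), fderiv ℝ (rdef ε) z ≠ 0 := by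
  rintro ⟨s, p⟩ hz h0
  have hfront := frontier_eq_one ε _ hz
  have hd : HasFDerivAt (rdef ε) (0 : (ℂ × ℂ) →L[ℝ] ℝ) (s, p) := by
    have := (rdef_diff ε (s, p)).hasFDerivAt
    rwa [h0] at this
  have key : ∀ v : ℂ × ℂ, HasDerivAt (fun t : ℝ => rdef ε ((s, p) + t • v)) 0 0 := by
    intro v
    have hγ : HasDerivAt (fun t : ℝ => (s, p) + t • v) v 0 := by
      have := ((hasDerivAt_id (0 : ℝ)).smul_const v).const_add (s, p)
      simpa using this
    have hd2 : HasFDerivAt (rdef ε) (0 : (ℂ × ℂ) →L[ℝ] ℝ) ((s, p) + (0:ℝ) • v) := by simpa using hd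
    have := hd2.comp_hasDerivAt 0 hγ
    simp only [ContinuousLinearMap.zero_apply] at this
    exact this
  set A : ℝ := ‖s - (starRingEnd ℂ) s * p‖ ^ 2 with hA
  set B : ℝ := ‖p‖ ^ 2 with hB
  have hAnn : 0 ≤ A := sq_nonneg _
  have hBnn : 0 ≤ B := sq_nonneg _
  have hfront' : Real.sqrt (A + ε) + B = 1 := hfront
  have hsqrt_pos : 0 < Real.sqrt (A + ε) := Real.sqrt_pos.2 (by linarith)
  have h1B : 1 - B = Real.sqrt (A + ε) := by linarith
  have h1Bpos : 0 < 1 - B := by linarith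
  have hsq : (1 - B) ^ 2 = A + ε := by
    rw [h1B, Real.sq_sqrt (by linarith)]
  by_cases hA0 : A = 0
  · -- case s = conj s * p
    have hsp : s - (starRingEnd ℂ) s * p = 0 := by
      have := pow_eq_zero_iff (n := 2) (by norm_num) |>.1 hA0
      exact norm_eq_zero.1 this
    have hseq : s = (starRingEnd ℂ) s * p := sub_eq_zero.1 hsp
    have heq : (fun t : ℝ => rdef ε ((s, p) + t • ((0 : ℂ), p)))
        = fun t : ℝ => t ^ 2 * ‖s‖ ^ 2 + ε - (1 - (1 + t) ^ 2 * B) ^ 2 := by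
      funext t
      have h2 : (s, p) + t • ((0 : ℂ), p) = (s, (1 + (t : ℂ)) * p) := by
        simp [Prod.ext_iff, Complex.real_smul]; ring
      rw [h2]
      simp only [rdef]
      have e1 : s - (starRingEnd ℂ) s * ((1 + (t : ℂ)) * p) = -(t : ℂ) * s := by
        rw [show (starRingEnd ℂ) s * ((1 + (t : ℂ)) * p)
            = (1 + (t : ℂ)) * ((starRingEnd ℂ) s * p) by ring, ← hseq]
        ring
      rw [e1]
      have e2 : ‖-(t : ℂ) * s‖ ^ 2 = t ^ 2 * ‖s‖ ^ 2 := by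
        rw [norm_mul]
        simp [Complex.norm_real, mul_pow, sq_abs]
      have e3 : ‖(1 + (t : ℂ)) * p‖ ^ 2 = (1 + t) ^ 2 * B := by
        rw [norm_mul, mul_pow, hB]
        congr 1
        rw [show (1 + (t : ℂ)) = ((1 + t : ℝ) : ℂ) by push_cast; ring]
        rw [Complex.norm_real, Real.norm_eq_abs, _root_.sq_abs]
      rw [e2, e3]
    have hg : HasDerivAt
        (fun t : ℝ => t ^ 2 * ‖s‖ ^ 2 + ε - (1 - (1 + t) ^ 2 * B) ^ 2)
        (4 * B * (1 - B)) 0 := by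
      have hg1 : HasDerivAt (fun t : ℝ => t ^ 2 * ‖s‖ ^ 2)
          (2 * 0 ^ 1 * 1 * ‖s‖ ^ 2) 0 :=
        ((hasDerivAt_id (0 : ℝ)).pow 2).mul_const _
      have hg2 : HasDerivAt (fun t : ℝ => (1 - (1 + t) ^ 2 * B) ^ 2)
          (2 * (1 - (1 + 0) ^ 2 * B) ^ 1 * (-(2 * (1 + 0) ^ 1 * 1 * B))) 0 :=
        ((((hasDerivAt_id (0:ℝ)).const_add 1).pow 2).mul_const B).const_sub 1 |>.pow 2
      have := (hg1.add_const ε).sub hg2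
      convert this using 1
      try simp only [id_eq]
      all_goals first | rfl | (simp only [id_eq]; ring) | ring
    have hzero : (0 : ℝ) = 4 * B * (1 - B) := (key ((0 : ℂ), p)).unique (heq ▸ hg)
    have hBpos : 0 < B := by
      rcases lt_or_eq_of_le hBnn with h | h
      · exact h
      · exfalso
        have hs1 : Real.sqrt (A + ε) = 1 := by linarith
        have : A + ε = 1 := by
          have h2 := Real.sq_sqrt (show (0:ℝ) ≤ A + ε by linarith)
          rw [hs1] at h2
          simpa using h2.symm
        rw [hA0] at this
        linarith
    have : 0 < 4 * B * (1 - B) := by positivity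
    linarith
  · -- case A ≠ 0
    have hApos : 0 < A := lt_of_le_of_ne hAnn (Ne.symm hA0)
    have heq : (fun t : ℝ => rdef ε ((s, p) + t • (s, (0 : ℂ))))
        = fun t : ℝ => (1 + t) ^ 2 * A + (ε - (1 - B) ^ 2) := by
      funext t
      have h2 : (s, p) + t • (s, (0 : ℂ)) = ((1 + (t : ℂ)) * s, p) := by
        simp [Prod.ext_iff, Complex.real_smul]; ring
      rw [h2]
      simp only [rdef]
      have e1 : (1 + (t : ℂ)) * s - (starRingEnd ℂ) ((1 + (t : ℂ)) * s) * p
          = (1 + (t : ℂ)) * (s - (starRingEnd ℂ) s * p) := by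
        rw [map_mul]
        rw [show (starRingEnd ℂ) (1 + (t : ℂ)) = 1 + (t : ℂ) by
          rw [show (1 + (t : ℂ)) = ((1 + t : ℝ) : ℂ) by push_cast; ring, Complex.conj_ofReal]]
        ring
      rw [e1]
      have e2 : ‖(1 + (t : ℂ)) * (s - (starRingEnd ℂ) s * p)‖ ^ 2
          = (1 + t) ^ 2 * A := by
        rw [norm_mul, mul_pow, hA]
        congr 1
        rw [show (1 + (t : ℂ)) = ((1 + t : ℝ) : ℂ) by push_cast; ring]
        rw [Complex.norm_real, Real.norm_eq_abs, _root_.sq_abs]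
      rw [e2, hB]
      ring
    have hg : HasDerivAt (fun t : ℝ => (1 + t) ^ 2 * A + (ε - (1 - B) ^ 2)) (2 * A) 0 := by
      have := ((((hasDerivAt_id (0:ℝ)).const_add 1).pow 2).mul_const A).add_const
        (ε - (1 - B) ^ 2)
      convert this using 1
      try simp only [id_eq]
      all_goals first | rfl | (simp only [id_eq]; ring) | ring
    have hzero : (0 : ℝ) = 2 * A := (key (s, (0 : ℂ))).unique (heq ▸ hg)
    linarith
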